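/- Let G on vertex set V (|V| = n ≥ 3) be the disjoint union of k spanning arborescences A_1,...,A_k with k ≥ 2n−4. Then G contains a rainbow spanning arborescence, i.e., a spanning arborescence using at most one arc from each A_i. -/

import Mathlib

open Finset

variable {V : Type*}

/-- `A` is the arc set of an arborescence on vertex set `U` rooted at `r`:
all arcs lie within `U`, the root has no incoming arc, every other vertex of `U`
has exactly one incoming arc, and every vertex of `U` is reachable from `r`. -/
def IsArborOn [DecidableEq V] (U : Finset V) (A : Finset (V × V)) (r : V) : Prop :=
  r ∈ U ∧ (∀ e ∈ A, e.1 ∈ U ∧ e.2 ∈ U) ∧ (∀ e ∈ A, e.2 ≠ r) ∧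
  (∀ v ∈ U, v ≠ r → (A.filter (fun e => e.2 = v)).card = 1) ∧
  (∀ v ∈ U, Relation.ReflTransGen (fun a b => (a, b) ∈ A) r v)

/-- A spanning arborescence on the whole (finite) vertex type. -/
def IsSpanningArbor [Fintype V] [DecidableEq V] (A : Finset (V × V)) (r : V) : Prop :=
  IsArborOn Finset.univ A r

/-- `B` is rainbow w.r.t. the colored arc sets `A 0, …, A (k-1)`:
each arc of `B` can be assigned a color whose class contains it, with all
assigned colors distinct (i.e. at most one arc from each color). -/
def IsRainbowOf {k : ℕ} (A : Fin k → Finset (V × V)) (B : Finset (V × V)) : Prop :=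
  ∃ c : V × V → Fin k, Set.InjOn c ↑B ∧ ∀ e ∈ B, e ∈ A (c e)

section Aux

variable [DecidableEq V] {ι : Type*} [DecidableEq ι]

/-- If the root of an arborescence is outside a nonempty `S ⊆ U`, some arc enters `S`. -/
lemma arbor_enter {U : Finset V} {A : Finset (V × V)} {r : V}
    (h : IsArborOn U A r) {S : Finset V} (hSU : S ⊆ U) (hne : S.Nonempty) (hr : r ∉ S) :
    ∃ e ∈ A, e.2 ∈ S ∧ e.1 ∉ S := by
  obtain ⟨u, hu⟩ := hne
  have hreach := h.2.2.2.2 u (hSU hu)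
  suffices H : ∀ v, Relation.ReflTransGen (fun a b => (a, b) ∈ A) r v → v ∈ S →
      ∃ e ∈ A, e.2 ∈ S ∧ e.1 ∉ S by
    exact H u hreach hu
  intro v hv
  induction hv with
  | refl => intro h0; exact absurd h0 hr
  | tail hab harc ih =>
      rename_i b c
      intro hc
      by_cases hb : b ∈ S
      · exact ih hb
      · exact ⟨(b, c), harc, hc, hb⟩

/-- If no arc of an arborescence enters `S ∋ r`, then it restricts to an arborescence on `S`. -/
lemma arbor_restrict {U : Finset V} {A : Finset (V × V)} {r : V}
    (h : IsArborOn U A r) {S : Finset V} (hSU : S ⊆ U) (hrS : r ∈ S)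
    (hcl : ∀ e ∈ A, e.2 ∈ S → e.1 ∈ S) :
    IsArborOn S (A.filter (fun e => e.2 ∈ S)) r := by
  obtain ⟨h1, h2, h3, h4, h5⟩ := h
  refine ⟨hrS, ?_, ?_, ?_, ?_⟩
  · intro e he
    rw [mem_filter] at he
    exact ⟨hcl e he.1 he.2, he.2⟩
  · intro e he
    rw [mem_filter] at he
    exact h3 e he.1
  · intro v hv hvr
    have : (A.filter (fun e => e.2 ∈ S)).filter (fun e => e.2 = v) =
        A.filter (fun e => e.2 = v) := by
      rw [Finset.filter_filter]
      apply Finset.filter_congr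
      intro e _
      constructor
      · rintro ⟨_, hev⟩; exact hev
      · rintro hev; exact ⟨by rw [hev]; exact hv, hev⟩
    rw [this]
    exact h4 v (hSU hv) hvr
  · intro v hv
    have hvU := hSU hv
    have := h5 v hvU
    suffices H : ∀ w, Relation.ReflTransGen (fun a b => (a, b) ∈ A) r w → w ∈ S →
        Relation.ReflTransGen (fun a b => (a, b) ∈ A.filter (fun e => e.2 ∈ S)) r w by
      exact H v this hv
    intro w hw
    induction hw with
    | refl => intro _; exact Relation.ReflTransGen.refl
    | tail hab harc ih =>
        rename_i b c
        intro hc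
        have hb : b ∈ S := hcl (b, c) harc hc
        exact (ih hb).tail (mem_filter.mpr ⟨harc, hc⟩)

/-- An arborescence on `S` has fewer arcs than vertices. -/
lemma arbor_card_le {S : Finset V} {B : Finset (V × V)} {ρ : V}
    (h : IsArborOn S B ρ) : B.card + 1 ≤ S.card := by
  obtain ⟨h1, h2, h3, h4, _⟩ := h
  have hinj : Set.InjOn (Prod.snd : V × V → V) ↑B := by
    intro a ha b hb hab
    rw [Finset.mem_coe] at ha hb
    have hv : a.2 ∈ S := (h2 a ha).2
    have hcard := h4 a.2 hv (h3 a ha)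
    obtain ⟨x, hx⟩ := Finset.card_eq_one.mp hcard
    have hax : a ∈ B.filter (fun e => e.2 = a.2) := mem_filter.mpr ⟨ha, rfl⟩
    have hbx : b ∈ B.filter (fun e => e.2 = a.2) := mem_filter.mpr ⟨hb, hab.symm⟩
    rw [hx, mem_singleton] at hax hbx
    rw [hax, hbx]
  have hmaps : ∀ a ∈ B, a.2 ∈ S.erase ρ := fun a ha =>
    mem_erase.mpr ⟨h3 a ha, (h2 a ha).2⟩
  have hle := Finset.card_le_card_of_injOn Prod.snd hmaps hinj
  rw [card_erase_of_mem h1] at hle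
  have : 0 < S.card := card_pos.mpr ⟨ρ, h1⟩
  omega

lemma arbor_singleton (s : V) : IsArborOn ({s} : Finset V) (∅ : Finset (V × V)) s := by
  refine ⟨mem_singleton_self s, ?_, ?_, ?_, ?_⟩
  · intro e he; exact absurd he (notMem_empty e)
  · intro e he; exact absurd he (notMem_empty e)
  · intro v hv hvs; exact absurd (mem_singleton.mp hv) hvs
  · intro v hv
    rw [mem_singleton] at hv
    exact hv ▸ Relation.ReflTransGen.refl

lemma arbor_pair {p z : V} (hpz : p ≠ z) :
    IsArborOn ({p, z} : Finset V) ({(p, z)} : Finset (V × V)) p := by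
  refine ⟨mem_insert_self _ _, ?_, ?_, ?_, ?_⟩
  · intro a ha
    rw [mem_singleton] at ha
    subst ha
    exact ⟨mem_insert_self _ _, mem_insert_of_mem (mem_singleton_self _)⟩
  · intro a ha
    rw [mem_singleton] at ha
    subst ha
    exact hpz.symm
  · intro v hv hvp
    have hvz : v = z := by
      rcases mem_insert.mp hv with h | h
      · exact absurd h hvp
      · exact mem_singleton.mp h
    subst hvz
    rw [Finset.filter_singleton, if_pos rfl]
    exact card_singleton _
  · intro v hv
    rcases mem_insert.mp hv with rfl | h
    · exact Relation.ReflTransGen.refl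
    · rw [mem_singleton] at h
      subst h
      exact Relation.ReflTransGen.single (mem_singleton_self _)

lemma sdiff_erase_self' {U : Finset V} {s : V} (hs : s ∈ U) :
    U \ U.erase s = {s} := by
  ext v
  simp only [mem_sdiff, mem_erase, mem_singleton, not_and]
  constructor
  · rintro ⟨hvU, hv⟩
    by_contra hvs
    exact (hv hvs) hvU
  · rintro rfl
    exact ⟨hs, fun h _ => absurd rfl h⟩

lemma sdiff_sdiff_self' {U X : Finset V} (hX : X ⊆ U) : U \ (U \ X) = X := by
  ext v
  simp only [mem_sdiff, not_and, not_not]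
  constructor
  · rintro ⟨hvU, hv⟩
    exact hv hvU
  · intro hv
    exact ⟨hX hv, fun _ => hv⟩

/-- The greedy covering loop: given a partial rainbow arborescence covering `U \ S`, either
rainbow-complete it to all of `U`, or find a nonempty `S' ⊆ S` and many unused colors
none of which has an arc entering `S'`. -/
lemma greedy (U : Finset V) (A : ι → Finset (V × V)) :
    ∀ (n : ℕ) (S : Finset V), S.card = n → S ⊆ U →
    ∀ (D : Finset ι) (B : Finset (V × V)) (ρ : V) (f : V × V → ι),
    IsArborOn (U \ S) B ρ → Set.InjOn f ↑B → (∀ e ∈ B, e ∈ A (f e)) →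
    (∀ e ∈ B, f e ∉ D) →
    ((∃ B' ρ' f', IsArborOn U B' ρ' ∧ Set.InjOn f' ↑B' ∧ ∀ e ∈ B', e ∈ A (f' e)) ∨
      ∃ S' D', S' ⊆ S ∧ S'.Nonempty ∧ D' ⊆ D ∧
        (∀ i ∈ D', ∀ e ∈ A i, e.2 ∈ S' → e.1 ∉ U \ S') ∧
        D.card + S'.card ≤ D'.card + S.card) := by
  intro n
  induction n using Nat.strong_induction_on with
  | _ n ih =>
  intro S hSn hSU D B ρ f harb hinj hmem hdisj
  rcases S.eq_empty_or_nonempty with rfl | hSne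
  · left
    refine ⟨B, ρ, f, ?_, hinj, hmem⟩
    rwa [sdiff_empty] at harb
  by_cases hex : ∃ i ∈ D, ∃ e ∈ A i, e.2 ∈ S ∧ e.1 ∈ U \ S
  · obtain ⟨i, hiD, e, heA, h2S, h1R⟩ := hex
    obtain ⟨hρ, hB2, hB3, hB4, hB5⟩ := harb
    have huU : e.2 ∈ U := hSU h2S
    have heB : e ∉ B := fun hB => (mem_sdiff.mp ((hB2 e hB).2)).2 h2S
    have hRR : U \ S.erase e.2 = insert e.2 (U \ S) := by
      ext v
      simp only [mem_sdiff, mem_erase, mem_insert, not_and]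
      constructor
      · rintro ⟨hvU, hv⟩
        by_cases hvu : v = e.2
        · exact Or.inl hvu
        · exact Or.inr ⟨hvU, hv hvu⟩
      · rintro (rfl | ⟨hvU, hvS⟩)
        · exact ⟨huU, fun h => absurd rfl h⟩
        · exact ⟨hvU, fun _ => hvS⟩
    have harb' : IsArborOn (U \ S.erase e.2) (insert e B) ρ := by
      rw [hRR]
      refine ⟨mem_insert_of_mem hρ, ?_, ?_, ?_, ?_⟩
      · intro a ha
        rcases mem_insert.mp ha with rfl | haB
        · exact ⟨mem_insert_of_mem h1R, mem_insert_self _ _⟩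
        · exact ⟨mem_insert_of_mem (hB2 a haB).1, mem_insert_of_mem (hB2 a haB).2⟩
      · intro a ha
        rcases mem_insert.mp ha with rfl | haB
        · intro h
          exact (mem_sdiff.mp hρ).2 (h ▸ h2S)
        · exact hB3 a haB
      · intro v hv hvρ
        rcases mem_insert.mp hv with rfl | hvR
        · rw [Finset.filter_insert, if_pos rfl]
          have hBempty : B.filter (fun a => a.2 = e.2) = ∅ := by
            rw [Finset.filter_eq_empty_iff]
            intro a haB h
            exact (mem_sdiff.mp (hB2 a haB).2).2 (h ▸ h2S)
          rw [hBempty]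
          simp
        · rw [Finset.filter_insert, if_neg, hB4 v hvR hvρ]
          intro h
          exact (mem_sdiff.mp hvR).2 (h ▸ h2S)
      · intro v hv
        have hmono : ∀ x, Relation.ReflTransGen (fun a b => (a, b) ∈ B) ρ x →
            Relation.ReflTransGen (fun a b => (a, b) ∈ insert e B) ρ x :=
          fun x hx => Relation.ReflTransGen.mono (fun a b hab => mem_insert_of_mem hab) _ _ hx
        rcases mem_insert.mp hv with rfl | hvR
        · exact (hmono _ (hB5 e.1 h1R)).tail
            (by rw [show (e.1, e.2) = e from rfl]; exact mem_insert_self e B)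
        · exact hmono v (hB5 v hvR)
    set f' := Function.update f e i with hf'
    have hf'B : ∀ a ∈ B, f' a = f a := by
      intro a ha
      apply Function.update_of_ne
      rintro rfl
      exact heB ha
    have hf'e : f' e = i := Function.update_self _ _ _
    have hinj' : Set.InjOn f' ↑(insert e B) := by
      rw [Finset.coe_insert]
      intro a ha b hb hab
      rcases Set.mem_insert_iff.mp ha with rfl | haB <;>
        rcases Set.mem_insert_iff.mp hb with rfl | hbB
      · rfl
      · exfalso
        rw [Finset.mem_coe] at hbB
        rw [hf'e, hf'B b hbB] at hab
        exact hdisj b hbB (hab ▸ hiD)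
      · exfalso
        rw [Finset.mem_coe] at haB
        rw [hf'e, hf'B a haB] at hab
        exact hdisj a haB (hab.symm ▸ hiD)
      · rw [Finset.mem_coe] at haB hbB
        rw [hf'B a haB, hf'B b hbB] at hab
        exact hinj haB hbB hab
    have hmem' : ∀ a ∈ insert e B, a ∈ A (f' a) := by
      intro a ha
      rcases mem_insert.mp ha with rfl | haB
      · rw [hf'e]; exact heA
      · rw [hf'B a haB]; exact hmem a haB
    have hdisj' : ∀ a ∈ insert e B, f' a ∉ D.erase i := by
      intro a ha
      rcases mem_insert.mp ha with rfl | haB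
      · rw [hf'e]; exact notMem_erase _ _
      · rw [hf'B a haB]
        exact fun h => hdisj a haB (mem_of_mem_erase h)
    have hSpos : 0 < S.card := card_pos.mpr hSne
    have hlt : (S.erase e.2).card < n := by
      rw [card_erase_of_mem h2S]
      omega
    rcases ih _ hlt (S.erase e.2) rfl ((erase_subset _ _).trans hSU) (D.erase i)
        (insert e B) ρ f' harb' hinj' hmem' hdisj' with
      win | ⟨S', D', hS'sub, hS'ne, hD'sub, hcl, hcount⟩
    · exact Or.inl win
    · refine Or.inr ⟨S', D', hS'sub.trans (erase_subset _ _), hS'ne,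
        hD'sub.trans (erase_subset _ _), hcl, ?_⟩
      have he1 := card_erase_of_mem hiD
      have he2 := card_erase_of_mem h2S
      have hD1 : 1 ≤ D.card := card_pos.mpr ⟨i, hiD⟩
      omega
  · push_neg at hex
    refine Or.inr ⟨S, D, subset_rfl, hSne, subset_rfl, ?_, le_rfl⟩
    intro i hi e he h2
    exact hex i hi e he h2

/-- The greedy loop always succeeds when all available colors are arborescences on `U`
rooted inside the already-covered region, and there are enough of them. -/
lemma greedy_win {U : Finset V} {A : ι → Finset (V × V)} {r : ι → V} {S : Finset V}
    (hSU : S ⊆ U) {D : Finset ι} {B : Finset (V × V)} {ρ : V} {f : V × V → ι}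
    (harb : IsArborOn (U \ S) B ρ) (hinj : Set.InjOn f ↑B)
    (hmem : ∀ e ∈ B, e ∈ A (f e)) (hdisj : ∀ e ∈ B, f e ∉ D)
    (harbs : ∀ i ∈ D, IsArborOn U (A i) (r i)) (hroots : ∀ i ∈ D, r i ∉ S)
    (hcount : S.card ≤ D.card) :
    ∃ B' ρ' f', IsArborOn U B' ρ' ∧ Set.InjOn f' ↑B' ∧ ∀ e ∈ B', e ∈ A (f' e) := by
  rcases greedy U A S.card S rfl hSU D B ρ f harb hinj hmem hdisj with
    win | ⟨S', D', hS'S, hS'ne, hD'D, hclosed, hcard⟩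
  · exact win
  · exfalso
    have hS'pos : 0 < S'.card := card_pos.mpr hS'ne
    have hD'pos : 0 < D'.card := by omega
    obtain ⟨i, hi⟩ := card_pos.mp hD'pos
    have hri : r i ∉ S' := fun h => hroots i (hD'D hi) (hS'S h)
    obtain ⟨e, heA, h2, h1⟩ :=
      arbor_enter (harbs i (hD'D hi)) (hS'S.trans hSU) hS'ne hri
    exact hclosed i hi e heA h2
      (mem_sdiff.mpr ⟨((harbs i (hD'D hi)).2.1 e heA).1, h1⟩)

/-- Main lemma: sufficiently many spanning arborescences on `U` yield a rainbow one. -/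
lemma master [Nonempty ι] :
    ∀ (n : ℕ) (U : Finset V) (𝒞 : Finset ι) (A : ι → Finset (V × V)) (r : ι → V),
    U.card = n → U.Nonempty → (∀ i ∈ 𝒞, IsArborOn U (A i) (r i)) →
    U.card - 1 ≤ 𝒞.card → 2 * U.card - 4 ≤ 𝒞.card →
    ∃ B ρ f, IsArborOn U B ρ ∧ Set.InjOn f ↑B ∧ ∀ e ∈ B, e ∈ A (f e) := by
  intro n
  induction n using Nat.strong_induction_on with
  | _ n ih =>
  intro U 𝒞 A r hn hne harbs hC1 hC2
  have hUpos : 0 < U.card := card_pos.mpr hne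
  by_cases hn1 : U.card = 1
  · obtain ⟨ρ, hU⟩ := card_eq_one.mp hn1
    refine ⟨∅, ρ, fun _ => Classical.arbitrary ι, ?_, ?_, ?_⟩
    · rw [hU]; exact arbor_singleton ρ
    · simp
    · simp
  have hcard2 : 2 ≤ U.card := by omega
  have hCpos : 0 < 𝒞.card := by omega
  obtain ⟨i₀, hi₀⟩ := card_pos.mp hCpos
  have hsU : r i₀ ∈ U := (harbs i₀ hi₀).1
  have hinit : IsArborOn (U \ U.erase (r i₀)) (∅ : Finset (V × V)) (r i₀) := by
    rw [sdiff_erase_self' hsU]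
    exact arbor_singleton _
  rcases greedy U A (U.erase (r i₀)).card (U.erase (r i₀)) rfl (erase_subset _ _) 𝒞 ∅
      (r i₀) (fun _ => i₀) hinit (by simp) (by simp) (by simp) with
    win | ⟨S', D', hS'sub, hS'ne, hD'C, hclosed, hcount⟩
  · exact win
  have hS'U : S' ⊆ U := hS'sub.trans (erase_subset _ _)
  have hroots' : ∀ i ∈ D', r i ∈ S' := by
    intro i hi
    by_contra hri
    obtain ⟨e, heA, h2', h1'⟩ := arbor_enter (harbs i (hD'C hi)) hS'U hS'ne hri
    exact hclosed i hi e heA h2'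
      (mem_sdiff.mpr ⟨((harbs i (hD'C hi)).2.1 e heA).1, h1'⟩)
  have hclosed' : ∀ i ∈ D', ∀ e ∈ A i, e.2 ∈ S' → e.1 ∈ S' := by
    intro i hi e he h2'
    by_contra h1'
    exact hclosed i hi e he h2'
      (mem_sdiff.mpr ⟨((harbs i (hD'C hi)).2.1 e he).1, h1'⟩)
  have hecard : (U.erase (r i₀)).card = U.card - 1 := card_erase_of_mem hsU
  have hS'pos : 0 < S'.card := card_pos.mpr hS'ne
  have hS'le : S'.card ≤ U.card - 1 := hecard ▸ card_le_card hS'sub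
  by_cases ht1 : S'.card = 1
  · -- uncovered set is a single vertex z
    obtain ⟨z, hz⟩ := card_eq_one.mp ht1
    have hzU : z ∈ U := hS'U (hz ▸ mem_singleton_self z)
    by_cases hc : ∃ c ∈ 𝒞, r c ∉ S'
    · obtain ⟨c, hcC, hrc⟩ := hc
      obtain ⟨e, heA, h2', h1'⟩ := arbor_enter (harbs c hcC) hS'U hS'ne hrc
      have hez : e.2 = z := by
        rw [hz, mem_singleton] at h2'
        exact h2'
      have hpU : e.1 ∈ U := ((harbs c hcC).2.1 e heA).1
      have hpz : e.1 ≠ z := by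
        intro h
        exact h1' (by rw [hz, mem_singleton]; exact h)
      have hpairU : ({e.1, z} : Finset V) ⊆ U := by
        intro v hv
        rcases mem_insert.mp hv with rfl | hv
        · exact hpU
        · rw [mem_singleton] at hv; exact hv ▸ hzU
      have hpaircard : ({e.1, z} : Finset V).card = 2 := by
        rw [card_insert_of_notMem (by rw [mem_singleton]; exact hpz), card_singleton]
      have he' : e = (e.1, z) := by rw [← hez]
      have hpair : IsArborOn (U \ (U \ {e.1, z})) ({e} : Finset (V × V)) e.1 := by
        rw [sdiff_sdiff_self' hpairU, he']
        exact arbor_pair hpz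
      have hcD' : c ∉ D' := fun h => hrc (hroots' c h)
      refine greedy_win (A := A) (r := r) (D := D') (f := fun _ => c) sdiff_subset hpair ?_ ?_ ?_ ?_ ?_ ?_
      · intro a ha b hb hab
        rw [Finset.coe_singleton, Set.mem_singleton_iff] at ha hb
        rw [ha, hb]
      · intro a ha
        rw [mem_singleton] at ha
        exact ha ▸ heA
      · intro a _
        exact hcD'
      · exact fun i hi => harbs i (hD'C hi)
      · intro i hi
        rw [mem_sdiff, not_and, not_not]
        intro _
        have : r i = z := by
          have := hroots' i hi
          rwa [hz, mem_singleton] at this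
        rw [this]
        exact mem_insert_of_mem (mem_singleton_self _)
      · rw [card_sdiff_of_subset hpairU, hpaircard]
        omega
    · push_neg at hc
      refine greedy_win (A := A) (r := r) (D := 𝒞) (B := ∅) (ρ := z) (f := fun _ => i₀) (erase_subset z U)
        (by rw [sdiff_erase_self' hzU]; exact arbor_singleton z)
        (by simp) (by simp) (fun e he => absurd he (notMem_empty e))
        (fun i hi => harbs i hi) ?_ ?_
      · intro i hi
        have : r i = z := by
          have := hc i hi
          rwa [hz, mem_singleton] at this
        rw [this]
        exact notMem_erase _ _
      · rw [card_erase_of_mem hzU]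
        exact hC1
  · -- uncovered set S' has at least 2 vertices; recurse on S'
    have ht2 : 2 ≤ S'.card := by omega
    obtain ⟨B₁, ρ₁, f₁, harb₁, hinj₁, hmem₁⟩ :=
      ih S'.card (by omega) S' D' (fun i => (A i).filter (fun e => e.2 ∈ S')) r rfl hS'ne
        (fun i hi => arbor_restrict (harbs i (hD'C hi)) hS'U (hroots' i hi) (hclosed' i hi))
        (by omega) (by omega)
    have hmem₁' : ∀ e ∈ B₁, e ∈ A (f₁ e) := fun e he => (mem_filter.mp (hmem₁ e he)).1
    set E := B₁.image f₁ with hE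
    have hEcard : E.card + 1 ≤ S'.card := by
      have h1 : E.card ≤ B₁.card := hE ▸ Finset.card_image_le
      have h2 := arbor_card_le harb₁
      omega
    have hDE : D'.card ≤ (D' \ E).card + E.card := by
      have hsub : D' ⊆ (D' \ E) ∪ E := by
        intro x hx
        by_cases hxE : x ∈ E
        · exact mem_union_right _ hxE
        · exact mem_union_left _ (mem_sdiff.mpr ⟨hx, hxE⟩)
      exact (card_le_card hsub).trans (card_union_le _ _)
    refine greedy_win (A := A) (r := r) (D := D' \ E) (f := f₁) sdiff_subset
      (by rw [sdiff_sdiff_self' hS'U]; exact harb₁) hinj₁ hmem₁' ?_ ?_ ?_ ?_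
    · intro e he
      rw [mem_sdiff, not_and, not_not]
      intro _
      exact mem_image_of_mem f₁ he
    · exact fun i hi => harbs i (hD'C (mem_sdiff.mp hi).1)
    · intro i hi
      rw [mem_sdiff, not_and, not_not]
      intro _
      exact hroots' i (mem_sdiff.mp hi).1
    · rw [card_sdiff_of_subset hS'U]
      omega

end Aux

theorem stmt12 [Fintype V] [DecidableEq V] (hn : 3 ≤ Fintype.card V)
    (k : ℕ) (hk : 2 * Fintype.card V - 4 ≤ k)
    (A : Fin k → Finset (V × V)) (r : Fin k → V)
    (hA : ∀ i, IsSpanningArbor (A i) (r i)) :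
    ∃ (B : Finset (V × V)) (r' : V), IsSpanningArbor B r' ∧ IsRainbowOf A B := by
  have hk0 : 0 < k := by omega
  haveI : Nonempty (Fin k) := ⟨⟨0, hk0⟩⟩
  have hV : 0 < Fintype.card V := by omega
  haveI : Nonempty V := Fintype.card_pos_iff.mp hV
  have hUcard : (univ : Finset V).card = Fintype.card V := card_univ
  have hCcard : (univ : Finset (Fin k)).card = k := by
    rw [card_univ, Fintype.card_fin]
  obtain ⟨B, ρ, f, harb, hinj, hmem⟩ :=
    master (Fintype.card V) univ univ A r hUcard univ_nonempty
      (fun i _ => hA i)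
      (by rw [hUcard, hCcard]; omega)
      (by rw [hUcard, hCcard]; omega)
  exact ⟨B, ρ, harb, f, hinj, hmem⟩
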